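/- Let M be a set, let μ̂ be a measure on M (with a given measurable space structure), let Υ : M → ℝ, let n, k ∈ ℝ with k ≠ n/2, let P and P̂ be ℝ-linear operators on real-valued functions on M such that P̂ is the (n/2+k, n/2-k)-conformal transform of P by Υ, i.e. (P̂ f)(x) = exp(-(n/2+k)·Υ(x)) · P(y ↦ exp((n/2-k)·Υ(y))·f(y))(x), and suppose P̂ is formally self-adjoint with respect to μ̂, i.e. ∫ f·(P̂ g) dμ̂ = ∫ (P̂ f)·g dμ̂ for all f, g : M → ℝ. Let u : M → ℝ satisfy P u = 0, set û(x) := exp((k-n/2)·Υ(x))·u(x), and set v := (2/(n-2k))·P̂ 1, where 1 is the constant function one. Then ∫ û·v dμ̂ = 0. -/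

import Mathlib

open Real MeasureTheory

/-- Theorem 5.3 (Gover–Malchiodi) of the paper, for a single conformal factor:
if `P̂` is the `(n/2+k, n/2-k)`-conformal transform of `P` by `Υ`, `P̂` is
formally self-adjoint with respect to `μ̂`, `P u = 0`, `û = e^{(k-n/2)Υ} u`
and `v = (2/(n-2k)) P̂ 1` is the `Q_k`-curvature of the transformed metric,
then `∫ û · v dμ̂ = 0`. -/
theorem integral_kernel_against_Qk_eq_zero
    {M : Type*} [MeasurableSpace M] (μhat : Measure M) (Υ : M → ℝ) (n k : ℝ)
    (hk : k ≠ n / 2)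
    (P Phat : (M → ℝ) →ₗ[ℝ] (M → ℝ))
    (hconf : ∀ (f : M → ℝ) (x : M),
      Phat f x = Real.exp (-(n / 2 + k) * Υ x)
        * P (fun y => Real.exp ((n / 2 - k) * Υ y) * f y) x)
    (hsa : ∀ f g : M → ℝ,
      ∫ x, f x * Phat g x ∂μhat = ∫ x, Phat f x * g x ∂μhat)
    (u : M → ℝ) (hu : P u = 0) :
    ∫ x, (Real.exp ((k - n / 2) * Υ x) * u x)
        * ((2 / (n - 2 * k)) * Phat (fun _ => (1 : ℝ)) x) ∂μhat = 0 := by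
  set uh : M → ℝ := fun y => Real.exp ((k - n / 2) * Υ y) * u y with huh
  have key : ∀ x, Phat uh x = 0 := by
    intro x
    rw [hconf]
    have h1 : (fun y => Real.exp ((n / 2 - k) * Υ y) * uh y) = u := by
      funext y
      rw [huh]
      rw [← mul_assoc, ← Real.exp_add]
      have : (n / 2 - k) * Υ y + (k - n / 2) * Υ y = 0 := by ring
      rw [this, Real.exp_zero, one_mul]
    rw [h1, hu]
    simp
  have h2 : ∀ x, uh x * ((2 / (n - 2 * k)) * Phat (fun _ => (1 : ℝ)) x)
      = (2 / (n - 2 * k)) * (uh x * Phat (fun _ => (1 : ℝ)) x) := by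
    intro x; ring
  simp only [huh] at h2
  simp_rw [h2]
  rw [MeasureTheory.integral_const_mul, hsa uh (fun _ => 1)]
  have : ∀ x, Phat uh x * (1 : ℝ) = 0 := by intro x; rw [key x, zero_mul]
  simp_rw [this, integral_zero, mul_zero]
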